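/- Let t be a rooted tree with pairwise distinct leaf labels in which every internal vertex has at least two children, let S be a set of labels, and let a be a leaf label of t with a ∉ S. Let Φ(S) denote the number of vertices of t that are incomplete with respect to S, and let k denote the number of vertices that are complete with respect to S ∪ {a} but not complete with respect to S. Then k ≥ 1 and Φ(S ∪ {a}) ≤ Φ(S) − k + 2; i.e., inserting one leaf decreases the number of incomplete vertices by at least k − 2 (the potential-method bound giving amortized constant time per leaf insertion). -/

import Mathlib

inductive RTree (α : Type*) where
  | leaf (a : α)
  | node (children : List (RTree α))

namespace RTree

variable {α : Type*} [DecidableEq α]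

/-- The list of leaf labels of a tree. -/
def leafList : RTree α → List α
  | leaf a => [a]
  | node cs => (cs.attach.map fun ⟨w, _⟩ => leafList w).flatten
decreasing_by have := List.sizeOf_lt_of_mem ‹_›; simp only [node.sizeOf_spec]; omega

/-- `L v` is the finite set of labels of leaves in the subtree rooted at `v`. -/
def L (v : RTree α) : Finset α := (leafList v).toFinset

/-- The counter function. -/
def counter (S : Finset α) : RTree α → ℕ
  | leaf a => if a ∈ S then 1 else 0
  | node cs =>
      (cs.attach.map fun ⟨w, _⟩ =>
        if counter S w = (L w).card then counter S w else 0).sum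
decreasing_by have := List.sizeOf_lt_of_mem ‹_›; simp only [node.sizeOf_spec]; omega

/-- `IsVertex v t` means that `v` is a vertex (subtree) of `t`. -/
inductive IsVertex : RTree α → RTree α → Prop
  | refl (t : RTree α) : IsVertex t t
  | child {v w : RTree α} {cs : List (RTree α)} : w ∈ cs → IsVertex v w → IsVertex v (node cs)

/-- The list of all vertices (subtrees) of a tree. -/
def vertexList : RTree α → List (RTree α)
  | leaf a => [leaf a]
  | node cs => node cs :: (cs.attach.map fun ⟨w, _⟩ => vertexList w).flatten
decreasing_by have := List.sizeOf_lt_of_mem ‹_›; simp only [node.sizeOf_spec]; omega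


/-- `Φ(S)`: the number of vertices of the tree that are incomplete with respect to `S`,
i.e. with `0 < counter_S(v) < |L(v)|`. -/
def phi (S : Finset α) (t : RTree α) : ℕ :=
  ((vertexList t).filter fun v =>
    decide (0 < counter S v) && decide (counter S v < (L v).card)).length

/-- The number of vertices that are complete with respect to `S ∪ {a}` but not complete
with respect to `S`. -/
def newlyComplete (S : Finset α) (a : α) (t : RTree α) : ℕ :=
  ((vertexList t).filter fun v =>
    decide (counter (insert a S) v = (L v).card) &&
      !decide (counter S v = (L v).card)).length

set_option linter.unusedSectionVars false

lemma myInd (P : RTree α → Prop) (hleaf : ∀ a, P (leaf a))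
    (hnode : ∀ cs, (∀ w ∈ cs, P w) → P (node cs)) : ∀ t, P t := by
  have H : ∀ n (t : RTree α), sizeOf t ≤ n → P t := by
    intro n
    induction n with
    | zero => intro t h; cases t <;> simp_all
    | succ n IH =>
      intro t h
      cases t with
      | leaf a => exact hleaf a
      | node cs =>
        refine hnode cs fun w hw => IH w ?_
        have := List.sizeOf_lt_of_mem hw
        simp only [node.sizeOf_spec] at h
        omega
  exact fun t => H (sizeOf t) t le_rfl

lemma counter_node (S : Finset α) (cs : List (RTree α)) :
    counter S (node cs) =
      (cs.map fun w => if counter S w = (L w).card then counter S w else 0).sum := by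
  rw [counter]
  congr 1
  have : (fun (x : {w // w ∈ cs}) => match x with
      | ⟨w, _⟩ => if counter S w = (L w).card then counter S w else 0)
      = fun x => if counter S x.1 = (L x.1).card then counter S x.1 else 0 := rfl
  rw [this]
  simp

lemma leafList_node (cs : List (RTree α)) :
    leafList (node cs) = (cs.map leafList).flatten := by
  rw [leafList]; congr 1
  have : (fun (x : {w // w ∈ cs}) => match x with | ⟨w, _⟩ => leafList w)
      = fun x => leafList x.1 := rfl
  rw [this]
  simp

lemma vertexList_node (cs : List (RTree α)) :
    vertexList (node cs) = node cs :: (cs.map vertexList).flatten := by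
  rw [vertexList]; congr 2
  have : (fun (x : {w // w ∈ cs}) => match x with | ⟨w, _⟩ => vertexList w)
      = fun x => vertexList x.1 := rfl
  rw [this]
  simp

lemma leafList_subset {v t : RTree α} (h : v ∈ vertexList t) : leafList v ⊆ leafList t := by
  induction t using myInd with
  | hleaf a => rw [vertexList] at h; simp at h; subst h; exact fun x hx => hx
  | hnode cs IH =>
    rw [vertexList_node] at h
    rcases List.mem_cons.1 h with h | h
    · subst h; exact fun x hx => hx
    · simp only [List.mem_flatten, List.mem_map] at h
      obtain ⟨l, ⟨w, hw, rfl⟩, hv⟩ := h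
      refine List.Subset.trans (IH w hw hv) ?_
      rw [leafList_node]
      intro x hx
      simp only [List.mem_flatten, List.mem_map]
      exact ⟨leafList w, ⟨w, hw, rfl⟩, hx⟩

lemma counter_insert_of_not_mem {a : α} (S : Finset α) {t : RTree α}
    (h : a ∉ leafList t) : counter (insert a S) t = counter S t := by
  induction t using myInd with
  | hleaf b =>
    rw [leafList] at h; simp at h
    rw [counter, counter]
    simp [Finset.mem_insert, Ne.symm h]
  | hnode cs IH =>
    rw [counter_node, counter_node]
    refine congrArg List.sum (List.map_congr_left fun w hw => ?_)
    have hw' : a ∉ leafList w := by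
      intro hx
      apply h
      rw [leafList_node]
      simp only [List.mem_flatten, List.mem_map]
      exact ⟨leafList w, ⟨w, hw, rfl⟩, hx⟩
    rw [IH w hw hw']

lemma card_L_of_nodup {t : RTree α} (h : (leafList t).Nodup) :
    (L t).card = (leafList t).length := by
  rw [L, List.toFinset_card_of_nodup h]

lemma nodup_child {cs : List (RTree α)} {w : RTree α} (hw : w ∈ cs)
    (h : (leafList (node cs)).Nodup) : (leafList w).Nodup := by
  rw [leafList_node] at h
  exact (List.nodup_flatten.1 h).1 (leafList w) (List.mem_map_of_mem hw)

lemma counter_le {t : RTree α} (h : (leafList t).Nodup) (S : Finset α) :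
    counter S t ≤ (L t).card := by
  induction t using myInd with
  | hleaf b => rw [counter]; rw [card_L_of_nodup h, leafList]; split <;> simp
  | hnode cs IH =>
    rw [counter_node, card_L_of_nodup h, leafList_node, List.length_flatten, List.map_map]
    refine List.sum_le_sum fun w hw => ?_
    have hnd := nodup_child hw h
    simp only [Function.comp]
    split
    · calc counter S w ≤ (L w).card := IH w hw hnd
        _ = (leafList w).length := card_L_of_nodup hnd
    · omega

lemma isVertex_child_of {w : RTree α} {cs : List (RTree α)} (hw : w ∈ cs)
    (hbr : ∀ cs' : List (RTree α), IsVertex (node cs') (node cs) → 2 ≤ cs'.length) :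
    ∀ cs' : List (RTree α), IsVertex (node cs') w → 2 ≤ cs'.length :=
  fun cs' h => hbr cs' (IsVertex.child hw h)

lemma one_le_leafList_length (t : RTree α)
    (hbr : ∀ cs : List (RTree α), IsVertex (node cs) t → 2 ≤ cs.length) :
    1 ≤ (leafList t).length := by
  induction t using myInd with
  | hleaf b => rw [leafList]; simp
  | hnode cs IH =>
    have h2 : 2 ≤ cs.length := hbr cs (IsVertex.refl _)
    obtain ⟨w, hw⟩ : ∃ w, w ∈ cs := by
      cases cs with
      | nil => simp at h2
      | cons x xs => exact ⟨x, List.mem_cons_self⟩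
    have h1 := IH w hw (isVertex_child_of hw hbr)
    rw [leafList_node, List.length_flatten]
    calc 1 ≤ (leafList w).length := h1
      _ ≤ _ := List.le_sum_of_mem (by
        rw [List.map_map]
        exact List.mem_map_of_mem hw)

lemma counter_lt {t : RTree α} {a : α} {S : Finset α} (hnd : (leafList t).Nodup)
    (ha : a ∈ leafList t) (haS : a ∉ S) : counter S t < (L t).card := by
  induction t using myInd with
  | hleaf b =>
    rw [leafList] at ha; simp at ha; subst ha
    rw [counter, card_L_of_nodup hnd, leafList]
    simp [haS]
  | hnode cs IH =>
    rw [leafList_node] at ha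
    simp only [List.mem_flatten, List.mem_map] at ha
    obtain ⟨l, ⟨u, hu, rfl⟩, hau⟩ := ha
    obtain ⟨l1, l2, rfl⟩ := List.append_of_mem hu
    have hndu := nodup_child hu hnd
    have hltu := IH u hu hndu hau
    have hfu : (if counter S u = (L u).card then counter S u else 0) = 0 := by
      rw [if_neg (Nat.ne_of_lt hltu)]
    have hnu : 1 ≤ (leafList u).length := List.length_pos_of_mem hau
    rw [counter_node, card_L_of_nodup hnd, leafList_node, List.length_flatten, List.map_map]
    simp only [List.map_append, List.map_cons, List.sum_append, List.sum_cons, hfu]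
    have h1 : (l1.map fun w => if counter S w = (L w).card then counter S w else 0).sum
        ≤ (l1.map (List.length ∘ leafList)).sum := by
      refine List.sum_le_sum fun w hw => ?_
      have hndw := nodup_child (by simp [hw] : w ∈ l1 ++ u :: l2) hnd
      simp only [Function.comp]
      split
      · exact (counter_le hndw S).trans_eq (card_L_of_nodup hndw)
      · omega
    have h2 : (l2.map fun w => if counter S w = (L w).card then counter S w else 0).sum
        ≤ (l2.map (List.length ∘ leafList)).sum := by
      refine List.sum_le_sum fun w hw => ?_
      have hndw := nodup_child (by simp [hw] : w ∈ l1 ++ u :: l2) hnd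
      simp only [Function.comp]
      split
      · exact (counter_le hndw S).trans_eq (card_L_of_nodup hndw)
      · omega
    simp only [Function.comp] at h1 h2 ⊢
    omega

lemma filter_length_node (p : RTree α → Bool) (cs : List (RTree α)) :
    ((vertexList (node cs)).filter p).length
      = (if p (node cs) = true then 1 else 0)
        + (cs.map fun w => ((vertexList w).filter p).length).sum := by
  rw [vertexList_node, List.filter_cons, List.filter_flatten, List.map_map]
  have : ((List.map (List.filter p ∘ vertexList) cs).flatten).length
      = (cs.map fun w => ((vertexList w).filter p).length).sum := by
    rw [List.length_flatten, List.map_map]; rfl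
  split
  · simp only [List.length_cons, this]; omega
  · simp only [this]; omega

lemma phi_node (S : Finset α) (cs : List (RTree α)) :
    phi S (node cs)
      = (if 0 < counter S (node cs) ∧ counter S (node cs) < (L (node cs)).card then 1 else 0)
        + (cs.map (phi S)).sum := by
  rw [phi, filter_length_node]
  simp only [Bool.and_eq_true, decide_eq_true_eq]
  rfl

lemma newlyComplete_node (S : Finset α) (a : α) (cs : List (RTree α)) :
    newlyComplete S a (node cs)
      = (if counter (insert a S) (node cs) = (L (node cs)).card
            ∧ counter S (node cs) ≠ (L (node cs)).card then 1 else 0)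
        + (cs.map (newlyComplete S a)).sum := by
  rw [newlyComplete, filter_length_node]
  simp only [Bool.and_eq_true, Bool.not_eq_true', decide_eq_true_eq, decide_eq_false_iff_not]
  rfl

lemma phi_insert_of_not_mem {a : α} (S : Finset α) {w : RTree α} (h : a ∉ leafList w) :
    phi (insert a S) w = phi S w := by
  rw [phi, phi]
  congr 1
  refine List.filter_congr fun v hv => ?_
  rw [counter_insert_of_not_mem S fun hx => h (leafList_subset hv hx)]

lemma newlyComplete_of_not_mem {a : α} (S : Finset α) {w : RTree α} (h : a ∉ leafList w) :
    newlyComplete S a w = 0 := by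
  rw [newlyComplete, List.length_eq_zero_iff, List.filter_eq_nil_iff]
  intro v hv
  rw [counter_insert_of_not_mem S fun hx => h (leafList_subset hv hx)]
  simp

lemma exists_split {cs : List (RTree α)} {a : α}
    (hnd : (leafList (node cs)).Nodup) (ha : a ∈ leafList (node cs)) :
    ∃ u l1 l2, cs = l1 ++ u :: l2 ∧ a ∈ leafList u ∧ ∀ w ∈ l1 ++ l2, a ∉ leafList w := by
  rw [leafList_node] at ha hnd
  simp only [List.mem_flatten, List.mem_map] at ha
  obtain ⟨l, ⟨u, hu, rfl⟩, hau⟩ := ha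
  obtain ⟨l1, l2, rfl⟩ := List.append_of_mem hu
  refine ⟨u, l1, l2, rfl, hau, ?_⟩
  have hpw := (List.nodup_flatten.1 hnd).2
  rw [List.map_append, List.map_cons] at hpw
  obtain ⟨hpw1, hpw2, hcross⟩ := List.pairwise_append.1 hpw
  intro w hw
  rcases List.mem_append.1 hw with hw | hw
  · intro hx
    exact hcross _ (List.mem_map_of_mem hw) _ (List.mem_cons_self) hx hau
  · intro hx
    exact (List.pairwise_cons.1 hpw2).1 _ (List.mem_map_of_mem hw) hau hx

lemma main_lemma {S : Finset α} {a : α} (haS : a ∉ S) :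
    ∀ t : RTree α, (leafList t).Nodup →
      (∀ cs : List (RTree α), IsVertex (node cs) t → 2 ≤ cs.length) →
      a ∈ leafList t →
      1 ≤ newlyComplete S a t ∧
        ((counter (insert a S) t = (L t).card ∧
            phi (insert a S) t + newlyComplete S a t ≤ phi S t + 1) ∨
          (counter (insert a S) t ≠ (L t).card ∧
            phi (insert a S) t + newlyComplete S a t ≤ phi S t + 2)) := by
  refine myInd _ ?_ ?_
  · -- leaf case
    intro b hnd hbr ha
    rw [leafList] at ha
    simp only [List.mem_singleton] at ha
    subst ha
    have hc : counter S (leaf a) = 0 := by rw [counter, if_neg haS]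
    have hc' : counter (insert a S) (leaf a) = 1 := by
      rw [counter, if_pos (Finset.mem_insert_self a S)]
    have hcard : (L (leaf a)).card = 1 := by
      rw [L, leafList]; simp
    have hv : vertexList (leaf a) = [leaf a] := by rw [vertexList]
    have hphi : phi S (leaf a) = 0 := by
      rw [phi, hv]; simp [hc]
    have hphi' : phi (insert a S) (leaf a) = 0 := by
      rw [phi, hv]; simp [hc', hcard]
    have hk : newlyComplete S a (leaf a) = 1 := by
      rw [newlyComplete, hv]; simp [hc, hc', hcard]
    refine ⟨by omega, Or.inl ⟨by omega, by omega⟩⟩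
  · -- node case
    intro cs IH hnd hbr ha
    obtain ⟨u, l1, l2, rfl, hau, hsib⟩ := exists_split hnd ha
    have hu : u ∈ l1 ++ u :: l2 := by simp
    have hndu : (leafList u).Nodup := nodup_child hu hnd
    have hbru := isVertex_child_of hu hbr
    obtain ⟨hk1, hcase⟩ := IH u hu hndu hbru hau
    have hcltu : counter S u < (L u).card := counter_lt hndu hau haS
    -- sibling facts
    have hsibf : ∀ w ∈ l1 ++ l2,
        (if counter (insert a S) w = (L w).card then counter (insert a S) w else 0)
          = (if counter S w = (L w).card then counter S w else 0) := by
      intro w hw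
      rw [counter_insert_of_not_mem S (hsib w hw)]
    -- counter decompositions
    have hcnt : counter S (node (l1 ++ u :: l2))
        = (l1.map fun w => if counter S w = (L w).card then counter S w else 0).sum
          + (l2.map fun w => if counter S w = (L w).card then counter S w else 0).sum := by
      rw [counter_node]
      simp only [List.map_append, List.map_cons, List.sum_append, List.sum_cons,
        if_neg (Nat.ne_of_lt hcltu)]
      omega
    have hcnt' : counter (insert a S) (node (l1 ++ u :: l2))
        = (l1.map fun w => if counter S w = (L w).card then counter S w else 0).sum
          + (if counter (insert a S) u = (L u).card then counter (insert a S) u else 0)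
          + (l2.map fun w => if counter S w = (L w).card then counter S w else 0).sum := by
      rw [counter_node]
      simp only [List.map_append, List.map_cons, List.sum_append, List.sum_cons]
      rw [List.map_congr_left (fun w hw => hsibf w (by simp [hw])),
        List.map_congr_left (fun w hw => hsibf w (by simp [hw]))]
      omega
    -- card decomposition
    have hcard : (L (node (l1 ++ u :: l2))).card
        = (l1.map (List.length ∘ leafList)).sum + (leafList u).length
          + (l2.map (List.length ∘ leafList)).sum := by
      rw [card_L_of_nodup hnd, leafList_node, List.length_flatten, List.map_map]
      simp only [List.map_append, List.map_cons, List.sum_append, List.sum_cons,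
        Function.comp_apply]
      omega
    have hcardu : (L u).card = (leafList u).length := card_L_of_nodup hndu
    have hnu1 : 1 ≤ (leafList u).length := List.length_pos_of_mem hau
    -- sum bounds
    have hb1 : (l1.map fun w => if counter S w = (L w).card then counter S w else 0).sum
        ≤ (l1.map (List.length ∘ leafList)).sum := by
      refine List.sum_le_sum fun w hw => ?_
      have hndw := nodup_child (by simp [hw] : w ∈ l1 ++ u :: l2) hnd
      simp only [Function.comp]
      split
      · exact (counter_le hndw S).trans_eq (card_L_of_nodup hndw)
      · omega
    have hb2 : (l2.map fun w => if counter S w = (L w).card then counter S w else 0).sum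
        ≤ (l2.map (List.length ∘ leafList)).sum := by
      refine List.sum_le_sum fun w hw => ?_
      have hndw := nodup_child (by simp [hw] : w ∈ l1 ++ u :: l2) hnd
      simp only [Function.comp]
      split
      · exact (counter_le hndw S).trans_eq (card_L_of_nodup hndw)
      · omega
    -- at least one sibling with a leaf
    have hsibpos : 1 ≤ (l1.map (List.length ∘ leafList)).sum
        + (l2.map (List.length ∘ leafList)).sum := by
      have h2 : 2 ≤ (l1 ++ u :: l2).length := hbr _ (IsVertex.refl _)
      obtain ⟨w0, hw0⟩ : ∃ w0, w0 ∈ l1 ++ l2 := by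
        cases l1 with
        | cons x xs => exact ⟨x, by simp⟩
        | nil =>
          cases l2 with
          | nil => simp at h2
          | cons y ys => exact ⟨y, by simp⟩
      have hw0' : w0 ∈ l1 ++ u :: l2 := by
        rcases List.mem_append.1 hw0 with h | h
        · simp [h]
        · simp [h]
      have h1 := one_le_leafList_length w0 (isVertex_child_of hw0' hbr)
      rcases List.mem_append.1 hw0 with h | h
      · have := List.le_sum_of_mem
          (List.mem_map_of_mem (f := List.length ∘ leafList) h)
        simp only [Function.comp] at this ⊢
        omega
      · have := List.le_sum_of_mem
          (List.mem_map_of_mem (f := List.length ∘ leafList) h)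
        simp only [Function.comp] at this ⊢
        omega
    -- phi and newlyComplete decompositions
    have hphiS : phi S (node (l1 ++ u :: l2))
        = (if 0 < counter S (node (l1 ++ u :: l2))
              ∧ counter S (node (l1 ++ u :: l2)) < (L (node (l1 ++ u :: l2))).card
            then 1 else 0)
          + ((l1.map (phi S)).sum + phi S u + (l2.map (phi S)).sum) := by
      rw [phi_node]
      simp only [List.map_append, List.map_cons, List.sum_append, List.sum_cons]
      omega
    have hphiS' : phi (insert a S) (node (l1 ++ u :: l2))
        = (if 0 < counter (insert a S) (node (l1 ++ u :: l2))
              ∧ counter (insert a S) (node (l1 ++ u :: l2)) < (L (node (l1 ++ u :: l2))).card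
            then 1 else 0)
          + ((l1.map (phi S)).sum + phi (insert a S) u + (l2.map (phi S)).sum) := by
      rw [phi_node]
      simp only [List.map_append, List.map_cons, List.sum_append, List.sum_cons]
      rw [List.map_congr_left (f := phi (insert a S)) (g := phi S)
          (fun w hw => phi_insert_of_not_mem S (hsib w (by simp [hw]))),
        List.map_congr_left (f := phi (insert a S)) (g := phi S)
          (fun w hw => phi_insert_of_not_mem S (hsib w (by simp [hw])))]
      omega
    have hKdec : newlyComplete S a (node (l1 ++ u :: l2))
        = (if counter (insert a S) (node (l1 ++ u :: l2)) = (L (node (l1 ++ u :: l2))).card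
              ∧ counter S (node (l1 ++ u :: l2)) ≠ (L (node (l1 ++ u :: l2))).card
            then 1 else 0)
          + newlyComplete S a u := by
      rw [newlyComplete_node]
      simp only [List.map_append, List.map_cons, List.sum_append, List.sum_cons]
      rw [List.map_congr_left (fun w hw => newlyComplete_of_not_mem S (hsib w (by simp [hw]))),
        List.map_congr_left (fun w hw => newlyComplete_of_not_mem S (hsib w (by simp [hw])))]
      simp
    have hrootlt : counter S (node (l1 ++ u :: l2)) < (L (node (l1 ++ u :: l2))).card :=
      counter_lt hnd ha haS
    have hrootle' : counter (insert a S) (node (l1 ++ u :: l2))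
        ≤ (L (node (l1 ++ u :: l2))).card := counter_le hnd _
    by_cases hu' : counter (insert a S) u = (L u).card
    · -- child u is newly complete
      rcases hcase with ⟨_, hIH⟩ | ⟨hne, _⟩
      swap
      · exact absurd hu' hne
      have hfu' : (if counter (insert a S) u = (L u).card then counter (insert a S) u else 0)
          = (L u).card := by rw [if_pos hu', hu']
      rw [hfu'] at hcnt'
      by_cases hroot : counter (insert a S) (node (l1 ++ u :: l2))
          = (L (node (l1 ++ u :: l2))).card
      · -- root newly complete
        have hpos : 0 < counter S (node (l1 ++ u :: l2)) := by omega
        have hindS : (if 0 < counter S (node (l1 ++ u :: l2))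
              ∧ counter S (node (l1 ++ u :: l2)) < (L (node (l1 ++ u :: l2))).card
            then 1 else 0) = 1 := if_pos ⟨hpos, hrootlt⟩
        have hindS' : (if 0 < counter (insert a S) (node (l1 ++ u :: l2))
              ∧ counter (insert a S) (node (l1 ++ u :: l2)) < (L (node (l1 ++ u :: l2))).card
            then 1 else 0) = 0 := by
          rw [if_neg]
          rintro ⟨-, hlt⟩
          omega
        have hindK : (if counter (insert a S) (node (l1 ++ u :: l2))
              = (L (node (l1 ++ u :: l2))).card
              ∧ counter S (node (l1 ++ u :: l2)) ≠ (L (node (l1 ++ u :: l2))).card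
            then 1 else 0) = 1 := if_pos ⟨hroot, Nat.ne_of_lt hrootlt⟩
        rw [hindS] at hphiS
        rw [hindS'] at hphiS'
        rw [hindK] at hKdec
        exact ⟨by omega, Or.inl ⟨hroot, by omega⟩⟩
      · -- root not complete
        have hpos' : 0 < counter (insert a S) (node (l1 ++ u :: l2)) := by omega
        have hindS' : (if 0 < counter (insert a S) (node (l1 ++ u :: l2))
              ∧ counter (insert a S) (node (l1 ++ u :: l2)) < (L (node (l1 ++ u :: l2))).card
            then 1 else 0) = 1 := if_pos ⟨hpos', lt_of_le_of_ne hrootle' hroot⟩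
        have hindK : (if counter (insert a S) (node (l1 ++ u :: l2))
              = (L (node (l1 ++ u :: l2))).card
              ∧ counter S (node (l1 ++ u :: l2)) ≠ (L (node (l1 ++ u :: l2))).card
            then 1 else 0) = 0 := by
          rw [if_neg]
          rintro ⟨h, -⟩
          exact hroot h
        have hindSle : (if 0 < counter S (node (l1 ++ u :: l2))
              ∧ counter S (node (l1 ++ u :: l2)) < (L (node (l1 ++ u :: l2))).card
            then 1 else 0) ≤ 1 := by split <;> omega
        rw [hindS'] at hphiS'
        rw [hindK] at hKdec
        refine ⟨by omega, Or.inr ⟨hroot, by omega⟩⟩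
    · -- child u not complete w.r.t. insert a S
      rcases hcase with ⟨heq, _⟩ | ⟨-, hIH⟩
      · exact absurd heq hu'
      have hfu' : (if counter (insert a S) u = (L u).card then counter (insert a S) u else 0)
          = 0 := if_neg hu'
      rw [hfu'] at hcnt'
      have hceq : counter (insert a S) (node (l1 ++ u :: l2))
          = counter S (node (l1 ++ u :: l2)) := by omega
      have hroot : counter (insert a S) (node (l1 ++ u :: l2))
          ≠ (L (node (l1 ++ u :: l2))).card := by omega
      have hindK : (if counter (insert a S) (node (l1 ++ u :: l2))
            = (L (node (l1 ++ u :: l2))).card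
            ∧ counter S (node (l1 ++ u :: l2)) ≠ (L (node (l1 ++ u :: l2))).card
          then 1 else 0) = 0 := by
        rw [if_neg]
        rintro ⟨h, -⟩
        exact hroot h
      rw [hceq] at hphiS'
      rw [hindK] at hKdec
      refine ⟨by omega, Or.inr ⟨hroot, by omega⟩⟩

/-- in a tree whose internal vertices all have at least two children, for a leaf
label `a ∉ S`, with `k` the number of vertices complete w.r.t. `S ∪ {a}` but not w.r.t. `S`,
we have `k ≥ 1` and `Φ(S ∪ {a}) ≤ Φ(S) − k + 2` (stated additively in `ℕ`). -/
theorem potential_bound (t : RTree α) (hnd : t.leafList.Nodup)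
    (hbr : ∀ cs : List (RTree α), IsVertex (node cs) t → 2 ≤ cs.length)
    (S : Finset α) (a : α) (ha : a ∈ leafList t) (haS : a ∉ S) :
    1 ≤ newlyComplete S a t ∧
      phi (insert a S) t + newlyComplete S a t ≤ phi S t + 2 := by
  obtain ⟨h1, hc⟩ := main_lemma haS t hnd hbr ha
  rcases hc with ⟨-, h2⟩ | ⟨-, h2⟩ <;> exact ⟨h1, by omega⟩

end RTree
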